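/- Correctness of shortcut contraction: let G' be a time-dependent graph with FIFO TTFs, v a node, and G'' the graph obtained by deleting v and adding, for every pair of edges (u,v), (v,w), a shortcut edge (u,w) with TTF c_{(u,v)} ⊕ c_{(v,w)}. Then for all nodes s, t ≠ v and all departure times τ, the earliest arrival time from s to t in G'' equals that in G'. -/

import Mathlib

/-- FIFO (no-overtaking) property of a travel-time function. -/
def FIFO (f : ℝ → ℝ) : Prop := ∀ ⦃τ τ' : ℝ⦄, τ < τ' → τ + f τ ≤ τ' + f τ'

/-- Chaining of two travel-time functions. -/
def chain (f g : ℝ → ℝ) : ℝ → ℝ := fun τ => f τ + g (τ + f τ)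

/-- A path from `s` to `t` in the graph with edge relation `E`, given as its vertex list. -/
def IsPath {V : Type*} (E : V → V → Prop) (s t : V) (p : List V) : Prop :=
  p.head? = some s ∧ p.getLast? = some t ∧ p.Chain' E

/-- Arrival time along a vertex list with time-dependent edge costs `c`, via iterated chaining. -/
def arriveP {V : Type*} (c : V → V → ℝ → ℝ) : List V → ℝ → ℝ
  | [], τ => τ
  | [_], τ => τ
  | u :: w :: rest, τ => arriveP c (w :: rest) (τ + c u w τ)

lemma arriveP_cons_cons {V : Type*} (c : V → V → ℝ → ℝ) (u w : V) (rest : List V) (τ : ℝ) :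
    arriveP c (u :: w :: rest) τ = arriveP c (w :: rest) (τ + c u w τ) := rfl

lemma fifo_le {f : ℝ → ℝ} (hf : FIFO f) {τ τ' : ℝ} (h : τ ≤ τ') : τ + f τ ≤ τ' + f τ' := by
  rcases eq_or_lt_of_le h with rfl | h
  · exact le_refl _
  · exact hf h

lemma fifo_min {f g : ℝ → ℝ} (hf : FIFO f) (hg : FIFO g) :
    FIFO (fun τ => min (f τ) (g τ)) := by
  intro τ τ' h
  have h1 : τ + min (f τ) (g τ) ≤ τ' + f τ' :=
    le_trans (by simp [min_le_left]) (hf h)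
  have h2 : τ + min (f τ) (g τ) ≤ τ' + g τ' :=
    le_trans (by simp [min_le_right]) (hg h)
  have h3 := le_min h1 h2
  simpa [min_add_add_left] using h3

lemma fifo_chain {f g : ℝ → ℝ} (hf : FIFO f) (hg : FIFO g) : FIFO (chain f g) := by
  intro τ τ' h
  have h1 : τ + f τ ≤ τ' + f τ' := hf h
  have h2 : (τ + f τ) + g (τ + f τ) ≤ (τ' + f τ') + g (τ' + f τ') := fifo_le hg h1
  simp only [chain]
  linarith

lemma arriveP_mono {V : Type*} {E : V → V → Prop} (c : V → V → ℝ → ℝ)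
    (hF : ∀ u w, E u w → FIFO (c u w)) :
    ∀ (p : List V), p.Chain' E → ∀ {τ τ' : ℝ}, τ ≤ τ' → arriveP c p τ ≤ arriveP c p τ' := by
  intro p
  induction p with
  | nil => intro _ τ τ' h; simpa [arriveP] using h
  | cons a tl ih =>
    cases tl with
    | nil => intro _ τ τ' h; simpa [arriveP] using h
    | cons b tl' =>
      intro hc τ τ' h
      simp only [List.Chain', List.isChain_cons_cons] at hc
      rw [arriveP_cons_cons, arriveP_cons_cons]
      exact ih hc.2 (fifo_le (hF a b hc.1) h)

theorem contraction_preserves_earliest_arrival {V : Type*}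
    (E' : V → V → Prop) (c : V → V → ℝ → ℝ)
    (hF : ∀ u w, FIFO (c u w)) (hnn : ∀ u w τ, 0 ≤ c u w τ)
    (v s t : V) (hs : s ≠ v) (ht : t ≠ v)
    (E'' : V → V → Prop)
    (hE'' : ∀ u w, E'' u w ↔ u ≠ v ∧ w ≠ v ∧ (E' u w ∨ (E' u v ∧ E' v w)))
    (c'' : V → V → ℝ → ℝ)
    (hc''min : ∀ u w, u ≠ v → w ≠ v → E' u v → E' v w → E' u w →
      c'' u w = fun τ => min (c u w τ) (chain (c u v) (c v w) τ))
    (hc''sc : ∀ u w, u ≠ v → w ≠ v → E' u v → E' v w → ¬ E' u w →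
      c'' u w = chain (c u v) (c v w))
    (hc''old : ∀ u w, ¬ (E' u v ∧ E' v w) → c'' u w = c u w)
    (EA' EA'' : ℝ → ℝ)
    (hAtt' : ∀ τ, ∃ p, IsPath E' s t p ∧ arriveP c p τ = EA' τ)
    (hMin' : ∀ τ p, IsPath E' s t p → EA' τ ≤ arriveP c p τ)
    (hAtt'' : ∀ τ, ∃ p, IsPath E'' s t p ∧ arriveP c'' p τ = EA'' τ)
    (hMin'' : ∀ τ p, IsPath E'' s t p → EA'' τ ≤ arriveP c'' p τ) :
    ∀ τ, EA'' τ = EA' τ := by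
  classical
  -- FIFO of c'' on edges of E''
  have hF'' : ∀ u w, E'' u w → FIFO (c'' u w) := by
    intro u w h
    obtain ⟨hu, hw, hor⟩ := (hE'' u w).mp h
    by_cases hp : E' u v ∧ E' v w
    · by_cases hd : E' u w
      · rw [hc''min u w hu hw hp.1 hp.2 hd]
        exact fifo_min (hF u w) (fifo_chain (hF u v) (hF v w))
      · rw [hc''sc u w hu hw hp.1 hp.2 hd]
        exact fifo_chain (hF u v) (hF v w)
    · rw [hc''old u w hp]; exact hF u w
  have hF' : ∀ u w, E' u w → FIFO (c u w) := fun u w _ => hF u w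
  -- c'' u w ≤ c u w when E' u w
  have hle_c : ∀ u w τ, u ≠ v → w ≠ v → E' u w → c'' u w τ ≤ c u w τ := by
    intro u w τ hu hw hd
    by_cases hp : E' u v ∧ E' v w
    · rw [hc''min u w hu hw hp.1 hp.2 hd]; exact min_le_left _ _
    · rw [hc''old u w hp]
  -- c'' u w ≤ chain when E' u v ∧ E' v w
  have hle_ch : ∀ u w τ, u ≠ v → w ≠ v → E' u v → E' v w →
      c'' u w τ ≤ chain (c u v) (c v w) τ := by
    intro u w τ hu hw h1 h2
    by_cases hd : E' u w
    · rw [hc''min u w hu hw h1 h2 hd]; exact min_le_right _ _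
    · rw [hc''sc u w hu hw h1 h2 hd]
  -- Contraction direction: every E'-path can be replaced by an E''-path, no worse.
  have contract : ∀ n (p : List V) (u : V), p.length ≤ n → u ≠ v →
      p.head? = some u → p.getLast? = some t → p.Chain' E' →
      ∃ p', IsPath E'' u t p' ∧ ∀ τ, arriveP c'' p' τ ≤ arriveP c p τ := by
    intro n
    induction n with
    | zero =>
      intro p u hlen _ hhead _ _
      have hnil : p = [] := List.length_eq_zero_iff.mp (Nat.le_zero.mp hlen)
      subst hnil; simp at hhead
    | succ n ih =>
      intro p u hlen hu hhead hlast hchain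
      rcases p with _ | ⟨a, _ | ⟨b, rest⟩⟩
      · simp at hhead
      · simp at hhead hlast
        subst a
        refine ⟨[u], ⟨rfl, by simpa using hlast, List.isChain_singleton _⟩, ?_⟩
        intro τ; simp [arriveP]
      · have ha : a = u := by simpa using hhead
        subst a
        simp only [List.Chain', List.isChain_cons_cons] at hchain
        obtain ⟨hEub, hchain2⟩ := hchain
        have hlast2 : (b :: rest).getLast? = some t := by
          rw [List.getLast?_cons_cons] at hlast; exact hlast
        by_cases hb : b = v
        · subst b
          rcases rest with _ | ⟨x, rest'⟩
          · exfalso; simp at hlast2; exact ht hlast2.symm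
          · simp only [List.Chain', List.isChain_cons_cons] at hchain2
            obtain ⟨hEvx, hchain3⟩ := hchain2
            have hlast3 : (x :: rest').getLast? = some t := by
              rw [List.getLast?_cons_cons] at hlast2; exact hlast2
            by_cases hx : x = v
            · -- consecutive occurrences of v: drop one
              subst x
              rcases rest' with _ | ⟨y, rest''⟩
              · exfalso; simp at hlast3; exact ht hlast3.symm
              · simp only [List.Chain', List.isChain_cons_cons] at hchain3
                obtain ⟨hEvy, hchain4⟩ := hchain3
                have hlast4 : (y :: rest'').getLast? = some t := by
                  rw [List.getLast?_cons_cons] at hlast3; exact hlast3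
                have hlen2 : (u :: v :: y :: rest'').length ≤ n := by
                  simp at hlen ⊢; omega
                obtain ⟨q', hq, hqle⟩ := ih (u :: v :: y :: rest'') u hlen2 hu rfl
                  (by rw [List.getLast?_cons_cons, List.getLast?_cons_cons]; exact hlast4)
                  (by simp only [List.Chain', List.isChain_cons_cons]
                      exact ⟨hEub, hEvy, hchain4⟩)
                refine ⟨q', hq, ?_⟩
                intro τ
                refine le_trans (hqle τ) ?_
                rw [arriveP_cons_cons, arriveP_cons_cons, arriveP_cons_cons,
                  arriveP_cons_cons]
                apply arriveP_mono c hF' (y :: rest'') hchain4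
                exact fifo_le (hF v y) (by have h0 := hnn v v (τ + c u v τ); linarith)
            · -- shortcut u → x through v
              have hlen2 : (x :: rest').length ≤ n := by simp at hlen ⊢; omega
              obtain ⟨q', ⟨hqh, hql, hqc⟩, hqle⟩ :=
                ih (x :: rest') x hlen2 hx rfl hlast3 hchain3
              rcases q' with _ | ⟨x', q''⟩
              · simp at hqh
              · have hx' : x' = x := by simpa using hqh
                subst x'
                have hE''ux : E'' u x := (hE'' u x).mpr ⟨hu, hx, Or.inr ⟨hEub, hEvx⟩⟩
                refine ⟨u :: x :: q'', ⟨rfl, ?_, ?_⟩, ?_⟩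
                · rw [List.getLast?_cons_cons]; exact hql
                · simp only [List.Chain', List.isChain_cons_cons]; exact ⟨hE''ux, hqc⟩
                · intro τ
                  rw [arriveP_cons_cons]
                  have step1 : arriveP c'' (x :: q'') (τ + c'' u x τ) ≤
                      arriveP c'' (x :: q'') (τ + chain (c u v) (c v x) τ) := by
                    apply arriveP_mono c'' hF'' (x :: q'') hqc
                    have h1 := hle_ch u x τ hu hx hEub hEvx
                    linarith
                  refine le_trans step1 ?_
                  refine le_trans (hqle _) ?_
                  rw [arriveP_cons_cons, arriveP_cons_cons]
                  have harg : τ + chain (c u v) (c v x) τ =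
                      τ + c u v τ + c v x (τ + c u v τ) := by
                    simp [chain]; ring
                  rw [harg]
        · -- b ≠ v : keep the edge
          have hlen2 : (b :: rest).length ≤ n := by simp at hlen ⊢; omega
          obtain ⟨q', ⟨hqh, hql, hqc⟩, hqle⟩ :=
            ih (b :: rest) b hlen2 hb rfl hlast2 hchain2
          rcases q' with _ | ⟨b', q''⟩
          · simp at hqh
          · have hb' : b' = b := by simpa using hqh
            subst b'
            have hE''ub : E'' u b := (hE'' u b).mpr ⟨hu, hb, Or.inl hEub⟩
            refine ⟨u :: b :: q'', ⟨rfl, ?_, ?_⟩, ?_⟩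
            · rw [List.getLast?_cons_cons]; exact hql
            · simp only [List.Chain', List.isChain_cons_cons]; exact ⟨hE''ub, hqc⟩
            · intro τ
              rw [arriveP_cons_cons, arriveP_cons_cons]
              have step1 : arriveP c'' (b :: q'') (τ + c'' u b τ) ≤
                  arriveP c'' (b :: q'') (τ + c u b τ) := by
                apply arriveP_mono c'' hF'' (b :: q'') hqc
                have h1 := hle_c u b τ hu hb hEub
                linarith
              exact le_trans step1 (hqle _)
  -- Expansion direction: every E''-path can be expanded into an E'-path, no worse (at a fixed τ).
  have expand : ∀ (p : List V) (u : V) (τ : ℝ),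
      p.head? = some u → p.getLast? = some t → p.Chain' E'' →
      ∃ p', IsPath E' u t p' ∧ arriveP c p' τ ≤ arriveP c'' p τ := by
    intro p
    induction p with
    | nil => intro u τ hh; simp at hh
    | cons a tl ih =>
      intro u τ hhead hlast hchain
      have ha : a = u := by simpa using hhead
      subst a
      cases tl with
      | nil =>
        simp at hlast
        refine ⟨[u], ⟨rfl, by simpa using hlast, List.isChain_singleton _⟩, ?_⟩
        simp [arriveP]
      | cons b tl' =>
        simp only [List.Chain', List.isChain_cons_cons] at hchain
        obtain ⟨hE''ub, hchain2⟩ := hchain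
        obtain ⟨hu, hb, hor⟩ := (hE'' u b).mp hE''ub
        have hlast2 : (b :: tl').getLast? = some t := by
          rw [List.getLast?_cons_cons] at hlast; exact hlast
        set τ₁ := τ + c'' u b τ with hτ₁
        obtain ⟨q', ⟨hqh, hql, hqc⟩, hqle⟩ := ih b τ₁ rfl hlast2 hchain2
        rcases q' with _ | ⟨b', q''⟩
        · simp at hqh
        · have hb' : b' = b := by simpa using hqh
          subst b'
          rw [arriveP_cons_cons]
          by_cases hp : E' u v ∧ E' v b
          · by_cases hd : E' u b
            · have hcm := hc''min u b hu hb hp.1 hp.2 hd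
              rcases min_cases (c u b τ) (chain (c u v) (c v b) τ) with ⟨hmin, _⟩ | ⟨hmin, _⟩
              · -- direct edge attains the min
                refine ⟨u :: b :: q'', ⟨rfl, ?_, ?_⟩, ?_⟩
                · rw [List.getLast?_cons_cons]; exact hql
                · simp only [List.Chain', List.isChain_cons_cons]; exact ⟨hd, hqc⟩
                · rw [arriveP_cons_cons]
                  have hc : c'' u b τ = c u b τ := by rw [hcm]; exact hmin
                  have h2 : τ + c u b τ = τ₁ := by rw [hτ₁, hc]
                  rw [h2]; exact hqle
              · -- the shortcut (via v) attains the min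
                refine ⟨u :: v :: b :: q'', ⟨rfl, ?_, ?_⟩, ?_⟩
                · rw [List.getLast?_cons_cons, List.getLast?_cons_cons]; exact hql
                · simp only [List.Chain', List.isChain_cons_cons]; exact ⟨hp.1, hp.2, hqc⟩
                · rw [arriveP_cons_cons, arriveP_cons_cons]
                  have hc : c'' u b τ = chain (c u v) (c v b) τ := by
                    rw [hcm]; exact hmin
                  have h2 : τ + c u v τ + c v b (τ + c u v τ) = τ₁ := by
                    rw [hτ₁, hc]; simp only [chain]; ring
                  rw [h2]; exact hqle
            · have hcm := hc''sc u b hu hb hp.1 hp.2 hd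
              refine ⟨u :: v :: b :: q'', ⟨rfl, ?_, ?_⟩, ?_⟩
              · rw [List.getLast?_cons_cons, List.getLast?_cons_cons]; exact hql
              · simp only [List.Chain', List.isChain_cons_cons]; exact ⟨hp.1, hp.2, hqc⟩
              · rw [arriveP_cons_cons, arriveP_cons_cons]
                have hc : c'' u b τ = chain (c u v) (c v b) τ := by rw [hcm]
                have h2 : τ + c u v τ + c v b (τ + c u v τ) = τ₁ := by
                  rw [hτ₁, hc]; simp only [chain]; ring
                rw [h2]; exact hqle
          · have hd : E' u b := hor.resolve_right hp
            have hcm := hc''old u b hp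
            refine ⟨u :: b :: q'', ⟨rfl, ?_, ?_⟩, ?_⟩
            · rw [List.getLast?_cons_cons]; exact hql
            · simp only [List.Chain', List.isChain_cons_cons]; exact ⟨hd, hqc⟩
            · rw [arriveP_cons_cons]
              have h2 : τ + c u b τ = τ₁ := by rw [hτ₁, hcm]
              rw [h2]; exact hqle
  -- Conclude by antisymmetry.
  intro τ
  apply le_antisymm
  · obtain ⟨p, ⟨hph, hpl, hpc⟩, harr⟩ := hAtt' τ
    obtain ⟨p', hp', hle⟩ := contract p.length p s le_rfl hs hph hpl hpc
    calc EA'' τ ≤ arriveP c'' p' τ := hMin'' τ p' hp'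
      _ ≤ arriveP c p τ := hle τ
      _ = EA' τ := harr
  · obtain ⟨p, ⟨hph, hpl, hpc⟩, harr⟩ := hAtt'' τ
    obtain ⟨p', hp', hle⟩ := expand p s τ hph hpl hpc
    calc EA' τ ≤ arriveP c p' τ := hMin' τ p' hp'
      _ ≤ arriveP c'' p τ := hle
      _ = EA'' τ := harr
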